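/- Let n ≥ 1, d ≥ 1, c > 0, let 1 ≤ s ≤ n, and let m_1*, …, m_s* be real target moments. Define f_s(x) = Σ_{k=1}^{s} (1/(4k))·(m_k(x) − m_k*)². Fix a robot i and coordinate r, and suppose the configuration x satisfies x i r ≠ x j r for every j ≠ i. Then the function t ↦ f_s(x with the coordinate x i r replaced by x i r + t) is differentiable at t = 0 with derivative −(c/n) · Σ_{k=1}^{s} (m_k(x) − m_k*) · [ (A(x) ∘ S_r(x)) · A(x)^{k−1} ]_{ii}; equivalently, the gradient-descent control is u_{ir} = (c/n) · Σ_{k=1}^{s} ((1/n)·tr(A(x)^k) − m_k*) · [ (A(x) ∘ S_r(x)) · A(x)^{k−1} ]_{ii}. -/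

import Mathlib

open Matrix

/-- The weighted adjacency matrix of a configuration `x : Fin n → Fin d → ℝ` of `n` robots
in `ℝ^d`: `A(x)_{ij} = exp(−c Σ_r |x i r − x j r|)` for `i ≠ j` and `A(x)_{ii} = 0`. -/
noncomputable def adjMat {n d : ℕ} (c : ℝ) (x : Fin n → Fin d → ℝ) :
    Matrix (Fin n) (Fin n) ℝ :=
  Matrix.of fun i j =>
    if i = j then 0 else Real.exp (-c * ∑ r, |x i r - x j r|)

/-- The matrix `S_r(x)` with `(i,j)` entry `sgn(x i r − x j r)`. -/
noncomputable def signMat {n d : ℕ} (x : Fin n → Fin d → ℝ) (r : Fin d) :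
    Matrix (Fin n) (Fin n) ℝ :=
  Matrix.of fun p q => Real.sign (x p r - x q r)

lemma hasDerivAt_abs_add {a : ℝ} (ha : a ≠ 0) :
    HasDerivAt (fun t : ℝ => |a + t|) (Real.sign a) 0 := by
  rcases ha.lt_or_gt with h | h
  · rw [Real.sign_of_neg h]
    have h1 : HasDerivAt (fun t : ℝ => -(a + t)) (-1) 0 := by
      simpa using (((hasDerivAt_id (0:ℝ)).const_add a).fun_neg)
    refine h1.congr_of_eventuallyEq ?_
    filter_upwards [Metric.ball_mem_nhds (0:ℝ) (by linarith : (0:ℝ) < -a)] with t ht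
    rw [Metric.mem_ball, Real.dist_eq, sub_zero] at ht
    obtain ⟨h2, h3⟩ := abs_lt.mp ht
    rw [abs_of_neg (by linarith)]
  · rw [Real.sign_of_pos h]
    have h1 : HasDerivAt (fun t : ℝ => a + t) 1 0 := ((hasDerivAt_id (0:ℝ)).const_add a)
    refine h1.congr_of_eventuallyEq ?_
    filter_upwards [Metric.ball_mem_nhds (0:ℝ) h] with t ht
    rw [Metric.mem_ball, Real.dist_eq, sub_zero] at ht
    obtain ⟨h2, h3⟩ := abs_lt.mp ht
    rw [abs_of_pos (by linarith)]

lemma adjMat_symm {n d : ℕ} (c : ℝ) (y : Fin n → Fin d → ℝ) (p q : Fin n) :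
    adjMat c y p q = adjMat c y q p := by
  simp only [adjMat, Matrix.of_apply]
  by_cases h : p = q
  · simp [h]
  · rw [if_neg h, if_neg fun hh => h hh.symm]
    have : (∑ r', |y p r' - y q r'|) = ∑ r', |y q r' - y p r'| :=
      Finset.sum_congr rfl fun r' _ => abs_sub_comm _ _
    rw [this]

/-- with `f_s(x) = Σ_{k=1}^s (1/(4k)) (m_k(x) − m_k*)²` where
`m_k(x) = (1/n) tr(A(x)^k)`, if robot `i`'s `r`-th coordinate differs from that of every
other robot, then `t ↦ f_s(x with x i r replaced by x i r + t)` is differentiable at `0`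
with derivative `−(c/n) Σ_{k=1}^s (m_k(x) − m_k*) [(A(x) ∘ S_r(x)) A(x)^(k−1)]_{ii}`. -/
theorem hasDerivAt_cost_along_coordinate (n d : ℕ) (hn : 1 ≤ n) (hd : 1 ≤ d)
    (c : ℝ) (hc : 0 < c) (s : ℕ) (hs1 : 1 ≤ s) (hsn : s ≤ n) (mstar : ℕ → ℝ)
    (x : Fin n → Fin d → ℝ) (i : Fin n) (r : Fin d)
    (hsep : ∀ j : Fin n, j ≠ i → x i r ≠ x j r) :
    HasDerivAt
      (fun t : ℝ =>
        ∑ k ∈ Finset.Icc 1 s, (1 / (4 * (k : ℝ))) *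
          ((1 / (n : ℝ)) *
              ((adjMat c (Function.update x i (Function.update (x i) r (x i r + t)))) ^ k).trace
            - mstar k) ^ 2)
      (-(c / (n : ℝ)) * ∑ k ∈ Finset.Icc 1 s,
        ((1 / (n : ℝ)) * ((adjMat c x) ^ k).trace - mstar k) *
          ((Matrix.hadamard (adjMat c x) (signMat x r)) * (adjMat c x) ^ (k - 1)) i i) 0 := by
  set A : Matrix (Fin n) (Fin n) ℝ := adjMat c x with hA
  set C : Matrix (Fin n) (Fin n) ℝ := Matrix.hadamard (adjMat c x) (signMat x r) with hC
  set F : ℝ → Matrix (Fin n) (Fin n) ℝ :=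
    fun t => adjMat c (Function.update x i (Function.update (x i) r (x i r + t))) with hFdef
  set B : Matrix (Fin n) (Fin n) ℝ := Matrix.of fun p q =>
    -c * ((if p = i then C i q else 0) + (if q = i then C i p else 0)) with hBdef
  have hF0 : F 0 = A := by
    simp only [hFdef, add_zero, Function.update_eq_self, hA]
  -- entrywise derivative of F
  have hentry : ∀ p q : Fin n, HasDerivAt (fun t => F t p q) (B p q) 0 := by
    intro p q
    by_cases hpq : p = q
    · subst hpq
      have hfun : (fun t => F t p p) = fun _ => (0:ℝ) := by
        funext t; simp [hFdef, adjMat]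
      have hz : B p p = 0 := by
        by_cases hpi : p = i
        · subst hpi
          simp [hBdef, hC, Matrix.hadamard_apply, signMat]
        · simp [hBdef, hpi]
      rw [hfun, hz]
      exact hasDerivAt_const _ _
    · by_cases hpi : p = i
      · -- p = i, q ≠ i
        have hqi : q ≠ i := fun h => hpq (hpi.trans h.symm)
        subst hpi
        have ha : x p r - x q r ≠ 0 := sub_ne_zero.mpr (hsep q hqi)
        have hsum : HasDerivAt
            (fun t => ∑ r' : Fin d, |Function.update (x p) r (x p r + t) r' - x q r'|)
            (∑ r' : Fin d, if r' = r then Real.sign (x p r - x q r) else 0) 0 := by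
          apply HasDerivAt.fun_sum
          intro r' _
          by_cases hr : r' = r
          · subst hr
            rw [if_pos rfl]
            have heq : (fun t : ℝ => |Function.update (x p) r' (x p r' + t) r' - x q r'|)
                = fun t : ℝ => |(x p r' - x q r') + t| := by
              funext t; rw [Function.update_self]; congr 1; ring
            rw [heq]
            exact hasDerivAt_abs_add ha
          · rw [if_neg hr]
            have heq : (fun t : ℝ => |Function.update (x p) r (x p r + t) r' - x q r'|)
                = fun _ : ℝ => |x p r' - x q r'| := by
              funext t; rw [Function.update_of_ne hr]
            rw [heq]
            exact hasDerivAt_const _ _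
        rw [Finset.sum_ite_eq' Finset.univ r (fun _ => Real.sign (x p r - x q r)),
          if_pos (Finset.mem_univ r)] at hsum
        have hexp := ((hsum.const_mul (-c)).exp)
        have h0 : (-c * ∑ r' : Fin d, |Function.update (x p) r (x p r + 0) r' - x q r'|)
            = -c * ∑ r' : Fin d, |x p r' - x q r'| := by
          simp [Function.update_eq_self]
        rw [h0] at hexp
        have hfun : (fun t => F t p q)
            = fun t => Real.exp (-c * ∑ r' : Fin d,
                |Function.update (x p) r (x p r + t) r' - x q r'|) := by
          funext t
          simp only [hFdef, adjMat, Matrix.of_apply, if_neg hpq, Function.update_self,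
            Function.update_of_ne hqi]
        have hBval : B p q = Real.exp (-c * ∑ r' : Fin d, |x p r' - x q r'|)
            * (-c * Real.sign (x p r - x q r)) := by
          simp only [hBdef, Matrix.of_apply, if_pos rfl, if_neg hqi, add_zero, hC,
            Matrix.hadamard_apply, signMat, adjMat, Matrix.of_apply, if_neg hpq, if_true]
          ring
        rw [hfun, hBval]
        exact hexp
      · by_cases hqi : q = i
        · -- q = i, p ≠ i
          subst hqi
          have ha : x q r - x p r ≠ 0 := sub_ne_zero.mpr (hsep p hpi)
          have hsum : HasDerivAt
              (fun t => ∑ r' : Fin d, |x p r' - Function.update (x q) r (x q r + t) r'|)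
              (∑ r' : Fin d, if r' = r then Real.sign (x q r - x p r) else 0) 0 := by
            apply HasDerivAt.fun_sum
            intro r' _
            by_cases hr : r' = r
            · subst hr
              rw [if_pos rfl]
              have heq : (fun t : ℝ => |x p r' - Function.update (x q) r' (x q r' + t) r'|)
                  = fun t : ℝ => |(x q r' - x p r') + t| := by
                funext t; rw [Function.update_self, abs_sub_comm]; congr 1; ring
              rw [heq]
              exact hasDerivAt_abs_add ha
            · rw [if_neg hr]
              have heq : (fun t : ℝ => |x p r' - Function.update (x q) r (x q r + t) r'|)
                  = fun _ : ℝ => |x p r' - x q r'| := by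
                funext t; rw [Function.update_of_ne hr]
              rw [heq]
              exact hasDerivAt_const _ _
          rw [Finset.sum_ite_eq' Finset.univ r (fun _ => Real.sign (x q r - x p r)),
            if_pos (Finset.mem_univ r)] at hsum
          have hexp := ((hsum.const_mul (-c)).exp)
          have h0 : (-c * ∑ r' : Fin d, |x p r' - Function.update (x q) r (x q r + 0) r'|)
              = -c * ∑ r' : Fin d, |x p r' - x q r'| := by
            simp [Function.update_eq_self]
          rw [h0] at hexp
          have hfun : (fun t => F t p q)
              = fun t => Real.exp (-c * ∑ r' : Fin d,
                  |x p r' - Function.update (x q) r (x q r + t) r'|) := by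
            funext t
            simp only [hFdef, adjMat, Matrix.of_apply, if_neg hpq, Function.update_self,
              Function.update_of_ne hpi]
          have hApq : adjMat c x q p = Real.exp (-c * ∑ r' : Fin d, |x p r' - x q r'|) := by
            rw [adjMat_symm]
            simp only [adjMat, Matrix.of_apply, if_neg hpq]
          have hBval : B p q = Real.exp (-c * ∑ r' : Fin d, |x p r' - x q r'|)
              * (-c * Real.sign (x q r - x p r)) := by
            simp only [hBdef, Matrix.of_apply, if_neg hpi, if_pos rfl, zero_add, hC,
              Matrix.hadamard_apply, signMat, Matrix.of_apply, if_true]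
            rw [hApq]
            ring
          rw [hfun, hBval]
          exact hexp
        · -- p ≠ i, q ≠ i : constant
          have hfun : (fun t => F t p q) = fun _ => A p q := by
            funext t
            simp only [hFdef, hA, adjMat, Matrix.of_apply, Function.update_of_ne hpi,
              Function.update_of_ne hqi]
          have hz : B p q = 0 := by simp [hBdef, hpi, hqi]
          rw [hfun, hz]
          exact hasDerivAt_const _ _
  -- symmetry of powers of A
  have hAT : Aᵀ = A := by
    ext p q
    simp only [Matrix.transpose_apply, hA]
    exact adjMat_symm c x q p
  have hpowsym : ∀ (m : ℕ) (l p' : Fin n), (A ^ m) l p' = (A ^ m) p' l := by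
    intro m l p'
    have h : (A ^ m)ᵀ = A ^ m := by rw [Matrix.transpose_pow, hAT]
    nth_rewrite 2 [← h]
    rfl
  -- derivative of entries of powers
  have hpow : ∀ (k : ℕ) (p q : Fin n), HasDerivAt (fun t => (F t ^ k) p q)
      ((∑ j ∈ Finset.range k, A ^ j * B * A ^ (k - 1 - j)) p q) 0 := by
    intro k
    induction k with
    | zero =>
      intro p q
      simp only [pow_zero, Finset.range_zero, Finset.sum_empty, Matrix.zero_apply]
      exact hasDerivAt_const _ _
    | succ k ih =>
      intro p q
      have hDsucc : (∑ j ∈ Finset.range (k+1), A ^ j * B * A ^ (k + 1 - 1 - j))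
          = B * A ^ k + A * (∑ j ∈ Finset.range k, A ^ j * B * A ^ (k - 1 - j)) := by
        rw [Finset.sum_range_succ']
        rw [add_comm]
        congr 1
        · simp
        · rw [Finset.mul_sum]
          refine Finset.sum_congr rfl fun j hj => ?_
          have h1 : k + 1 - 1 - (j + 1) = k - 1 - j := by omega
          rw [h1, pow_succ']
          simp only [mul_assoc]
      have h1 : HasDerivAt (fun t => ∑ l, F t p l * (F t ^ k) l q)
          (∑ l, (B p l * (F 0 ^ k) l q + F 0 p l
            * (∑ j ∈ Finset.range k, A ^ j * B * A ^ (k - 1 - j)) l q)) 0 := by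
        apply HasDerivAt.fun_sum
        intro l _
        exact (hentry p l).mul (ih l q)
      rw [hF0] at h1
      have hfun : (fun t => (F t ^ (k+1)) p q) = fun t => ∑ l, F t p l * (F t ^ k) l q := by
        funext t
        rw [pow_succ', Matrix.mul_apply]
      rw [hfun, hDsucc]
      convert h1 using 1
      simp [Matrix.add_apply, Matrix.mul_apply, Finset.sum_add_distrib]
  -- derivative of trace of powers
  have htrace : ∀ k : ℕ, HasDerivAt (fun t => (F t ^ k).trace)
      ((∑ j ∈ Finset.range k, A ^ j * B * A ^ (k - 1 - j)).trace) 0 := by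
    intro k
    have := HasDerivAt.fun_sum (fun p (_ : p ∈ Finset.univ) => hpow k p p)
    simpa [Matrix.trace, Matrix.diag] using this
  -- trace of B * A^m
  have htrB : ∀ m : ℕ, (B * A ^ m).trace = -(2*c) * ((C * A ^ m) i i) := by
    intro m
    have key : ∀ p l : Fin n, B p l * (A ^ m) l p
        = (if p = i then -c * (C i l * (A ^ m) l p) else 0)
          + (if l = i then -c * (C i p * (A ^ m) l p) else 0) := by
      intro p l
      simp only [hBdef, Matrix.of_apply]
      split_ifs <;> ring
    simp only [Matrix.trace, Matrix.diag, Matrix.mul_apply]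
    rw [Finset.sum_congr rfl fun p _ => Finset.sum_congr rfl fun l _ => key p l]
    simp only [Finset.sum_add_distrib]
    rw [Finset.sum_comm]
    simp only [Finset.sum_ite_eq', Finset.mem_univ, if_true]
    have e2 : (∑ p : Fin n, -c * (C i p * (A ^ m) i p))
        = ∑ p : Fin n, -c * (C i p * (A ^ m) p i) :=
      Finset.sum_congr rfl fun p _ => by rw [hpowsym m i p]
    rw [e2, Finset.mul_sum, ← Finset.sum_add_distrib]
    exact Finset.sum_congr rfl fun l _ => by ring
  -- trace of the derivative matrix of the k-th power
  have hDtr : ∀ k : ℕ, (∑ j ∈ Finset.range k, A ^ j * B * A ^ (k - 1 - j)).trace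
      = (k : ℝ) * (B * A ^ (k - 1)).trace := by
    intro k
    rw [Matrix.trace_sum]
    have hterm : ∀ j ∈ Finset.range k, (A ^ j * B * A ^ (k - 1 - j)).trace
        = (B * A ^ (k - 1)).trace := by
      intro j hj
      have hj' : j < k := Finset.mem_range.mp hj
      have he : k - 1 - j + j = k - 1 := by omega
      rw [mul_assoc, Matrix.trace_mul_comm, mul_assoc, ← pow_add, he]
    rw [Finset.sum_congr rfl hterm, Finset.sum_const, Finset.card_range, nsmul_eq_mul]
  -- assemble
  have hderiv : ∀ k ∈ Finset.Icc 1 s, HasDerivAt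
      (fun t => (1 / (4 * (k : ℝ))) * ((1 / (n : ℝ)) * ((F t) ^ k).trace - mstar k) ^ 2)
      (-(c / (n : ℝ)) * (((1 / (n : ℝ)) * (A ^ k).trace - mstar k) * ((C * A ^ (k-1)) i i))) 0 := by
    intro k hk
    obtain ⟨hk1, hk2⟩ := Finset.mem_Icc.mp hk
    have hk0 : (k : ℝ) ≠ 0 := Nat.cast_ne_zero.mpr (by omega)
    have h1 := htrace k
    rw [hDtr k, htrB (k-1)] at h1
    have h2 := ((h1.const_mul ((1:ℝ) / n)).sub_const (mstar k)).pow 2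
    have h3 := h2.const_mul (1 / (4 * (k : ℝ)))
    rw [hF0] at h3
    refine h3.congr_deriv ?_
    push_cast
    field_simp
    ring
  have hmain := HasDerivAt.fun_sum hderiv
  refine hmain.congr_deriv ?_
  rw [Finset.mul_sum]
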